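/- The matrices G₁ and G₃ (the figure eight knot holonomy generators) are parabolic elements of SU(2,1): each has all eigenvalues of modulus 1, is not diagonalizable, and fixes exactly one point on the boundary of complex hyperbolic space. The matrix G₂ is elliptic (diagonalizable with unit-modulus eigenvalues). -/

import Mathlib

open Complex Matrix

noncomputable section

/-- `ω = (1 - i√3)/2`. -/
def ω : ℂ := (1 - Complex.I * Real.sqrt 3) / 2

/-- The Hermitian form `⟨u,w⟩ = u₁·conj(w₃) + u₂·conj(w₂) + u₃·conj(w₁)` on `ℂ³`. -/
def herm (z w : Fin 3 → ℂ) : ℂ :=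
  z 0 * (starRingEnd ℂ) (w 2) + z 1 * (starRingEnd ℂ) (w 1) + z 2 * (starRingEnd ℂ) (w 0)

def G₁ : Matrix (Fin 3) (Fin 3) ℂ :=
  !![1, ω, -ω; 0, 1, -(starRingEnd ℂ) ω; 0, 0, 1]

def G₂ : Matrix (Fin 3) (Fin 3) ℂ :=
  !![1, 1, -ω; -1, 0, -(starRingEnd ℂ) ω; -(starRingEnd ℂ) ω, ω, 1]

def G₃ : Matrix (Fin 3) (Fin 3) ℂ :=
  !![1, 1, -ω; -ω, (starRingEnd ℂ) ω, -1 - (starRingEnd ℂ) ω; -(starRingEnd ℂ) ω, 0, 1 + ω]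

/-- All eigenvalues of `M` have modulus one. -/
def UnitEigenvalues (M : Matrix (Fin 3) (Fin 3) ℂ) : Prop :=
  ∀ μ : ℂ, M.charpoly.IsRoot μ → ‖μ‖ = 1

/-- `M` is diagonalizable over `ℂ`. -/
def Diagonalizable (M : Matrix (Fin 3) (Fin 3) ℂ) : Prop :=
  ∃ (P : Matrix (Fin 3) (Fin 3) ℂ) (d : Fin 3 → ℂ),
    IsUnit P.det ∧ M = P * Matrix.diagonal d * P⁻¹

/-- `M` fixes exactly one point of the boundary of complex hyperbolic space,
i.e. exactly one null line of `ℂ³` is invariant under `M`. -/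
def UniqueBoundaryFixedPoint (M : Matrix (Fin 3) (Fin 3) ℂ) : Prop :=
  ∃ v : Fin 3 → ℂ, v ≠ 0 ∧ herm v v = 0 ∧ (∃ μ : ℂ, M.mulVec v = μ • v) ∧
    ∀ w : Fin 3 → ℂ, w ≠ 0 → herm w w = 0 → (∃ μ : ℂ, M.mulVec w = μ • w) →
      ∃ c : ℂ, w = c • v

open Polynomial

set_option linter.unreachableTactic false
set_option linter.unusedTactic false

def P₂ : Matrix (Fin 3) (Fin 3) ℂ :=
  !![-1, 0, ω - 2; ω, 1 + ω, 1 + ω; 1, 2 - ω, 0]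

def d₂ : Fin 3 → ℂ := ![1, ω, 1 - ω]

lemma hrel : ω * ω = ω - 1 := by
  have h3 : (Real.sqrt 3 : ℂ)^2 = 3 := by
    rw [← Complex.ofReal_pow, Real.sq_sqrt (by norm_num : (0:ℝ) ≤ 3)]; norm_num
  have hI : (Complex.I)^2 = -1 := Complex.I_sq
  simp only [ω]
  linear_combination ((Real.sqrt 3:ℂ)^2/4) * hI - h3/4

lemma hconj : (starRingEnd ℂ) ω = 1 - ω := by
  simp only [ω, map_div₀, map_sub, map_ofNat, _root_.map_one, _root_.map_mul,
    Complex.conj_I, Complex.conj_ofReal]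
  ring

lemma hunit : ω * (1 - ω) = 1 := by linear_combination -hrel

lemma ω_ne : ω ≠ 0 := by
  intro h; have h2 := hunit; rw [h] at h2; simp at h2

lemma ω_ne' : (1:ℂ) - ω ≠ 0 := by
  intro h; have h2 := hunit; rw [h] at h2; simp at h2

lemma charpoly_G1 : G₁.charpoly = (X - 1)^3 := by
  rw [Matrix.charpoly, Matrix.det_fin_three]
  simp [charmatrix_apply_eq, charmatrix_apply_ne, G₁, Matrix.vecHead, Matrix.vecTail]
  ring

lemma hrelC : (C ω) * (C ω) = C ω - 1 := by
  rw [← _root_.map_mul, hrel]; simp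

lemma charpoly_G3 : G₃.charpoly = (X - 1)^3 := by
  rw [Matrix.charpoly, Matrix.det_fin_three]
  simp [charmatrix_apply_eq, charmatrix_apply_ne, G₃, Matrix.vecHead, Matrix.vecTail, hconj]
  linear_combination (C ω - 2) * hrelC

lemma charpoly_G2 : G₂.charpoly = X^3 - 2 * X^2 + 2 * X - 1 := by
  rw [Matrix.charpoly, Matrix.det_fin_three]
  simp [charmatrix_apply_eq, charmatrix_apply_ne, G₂, Matrix.vecHead, Matrix.vecTail, hconj]
  linear_combination (-1 : ℂ[X]) * hrelC

lemma unit_of_cube (M : Matrix (Fin 3) (Fin 3) ℂ) (h : M.charpoly = (X - 1)^3) :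
    UnitEigenvalues M := by
  intro μ hμ
  rw [h] at hμ
  simp only [Polynomial.IsRoot, Polynomial.eval_pow, Polynomial.eval_sub, Polynomial.eval_X,
    Polynomial.eval_one] at hμ
  have h1 : μ - 1 = 0 := pow_eq_zero_iff (by norm_num) |>.mp hμ
  rw [sub_eq_zero.mp h1]; simp

lemma unitEig_G1 : UnitEigenvalues G₁ := by
  apply unit_of_cube _ charpoly_G1

lemma unitEig_G3 : UnitEigenvalues G₃ := by
  apply unit_of_cube _ charpoly_G3

lemma unitEig_G2 : UnitEigenvalues G₂ := by
  intro μ hμ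
  rw [charpoly_G2] at hμ
  simp only [Polynomial.IsRoot, Polynomial.eval_sub, Polynomial.eval_add, Polynomial.eval_mul,
    Polynomial.eval_pow, Polynomial.eval_X, Polynomial.eval_one, Polynomial.eval_ofNat] at hμ
  have h6 : μ^6 = 1 := by linear_combination (μ^3 + 2*μ^2 + 2*μ + 1) * hμ
  have ha : (‖μ‖)^6 = 1 := by
    rw [← norm_pow, h6, norm_one]
  nlinarith [norm_nonneg μ, sq_nonneg (‖μ‖ - 1), sq_nonneg (‖μ‖ + 1),
    sq_nonneg ((‖μ‖)^2 - 1), sq_nonneg ((‖μ‖)^3 - 1), sq_nonneg ((‖μ‖)^2 + 1)]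

lemma not_diag (M : Matrix (Fin 3) (Fin 3) ℂ)
    (hcube : (M - 1) * (M - 1) * (M - 1) = 0) (hne : M ≠ 1) : ¬ Diagonalizable M := by
  rintro ⟨P, d, hP, heq⟩
  have hPi : P * P⁻¹ = 1 := Matrix.mul_nonsing_inv P hP
  have hiP : P⁻¹ * P = 1 := Matrix.nonsing_inv_mul P hP
  have c1 : ∀ x : Matrix (Fin 3) (Fin 3) ℂ, P * (P⁻¹ * x) = x := by
    intro x; rw [← Matrix.mul_assoc, hPi, Matrix.one_mul]
  have c2 : ∀ x : Matrix (Fin 3) (Fin 3) ℂ, P⁻¹ * (P * x) = x := by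
    intro x; rw [← Matrix.mul_assoc, hiP, Matrix.one_mul]
  set D := Matrix.diagonal d with hD
  have hM1 : M - 1 = P * ((D - 1) * P⁻¹) := by
    rw [heq, Matrix.sub_mul, Matrix.mul_sub, Matrix.one_mul, hPi, Matrix.mul_assoc]
  have key : P * ((D - 1) * ((D - 1) * ((D - 1) * P⁻¹))) = 0 := by
    calc P * ((D - 1) * ((D - 1) * ((D - 1) * P⁻¹)))
        = (P * ((D-1) * P⁻¹)) * (P * ((D-1) * P⁻¹)) * (P * ((D-1) * P⁻¹)) := by
          simp only [Matrix.mul_assoc, c2]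
      _ = (M - 1) * (M - 1) * (M - 1) := by rw [← hM1]
      _ = 0 := hcube
  have key2 : (D - 1) * (D - 1) * (D - 1) = 0 := by
    have h := congrArg (fun x => P⁻¹ * x) key
    simp only [Matrix.mul_zero, c2] at h
    have h2 := congrArg (fun x => x * P) h
    simp only [Matrix.zero_mul, Matrix.mul_assoc] at h2
    rw [hiP, Matrix.mul_one] at h2
    rw [Matrix.mul_assoc]; exact h2
  have hdiag : ∀ i : Fin 3, (d i - 1) * (d i - 1) * (d i - 1) = 0 := by
    intro i
    have h1 : D - 1 = Matrix.diagonal (fun i => d i - 1) := by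
      rw [hD, ← Matrix.diagonal_one, Matrix.diagonal_sub]
    rw [h1, Matrix.diagonal_mul_diagonal, Matrix.diagonal_mul_diagonal] at key2
    have := congrFun (congrFun key2 i) i
    simpa using this
  have hd1 : ∀ i, d i = 1 := by
    intro i
    have h3 : (d i - 1)^3 = 0 := by linear_combination hdiag i
    have := pow_eq_zero_iff (by norm_num : 3 ≠ 0) |>.mp h3
    exact sub_eq_zero.mp this
  have hD1 : D = 1 := by
    rw [hD, show d = fun _ => (1:ℂ) from funext hd1, Matrix.diagonal_one]
  apply hne
  rw [heq, hD1, Matrix.mul_one, hPi]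

lemma cube_G1 : (G₁ - 1) * (G₁ - 1) * (G₁ - 1) = 0 := by
  ext i j
  fin_cases i <;> fin_cases j <;>
    simp [Matrix.mul_apply, Fin.sum_univ_three, G₁, Matrix.one_apply, hconj,
      Matrix.vecHead, Matrix.vecTail] <;>
    ring

lemma cube_G3 : (G₃ - 1) * (G₃ - 1) * (G₃ - 1) = 0 := by
  ext i j
  fin_cases i <;> fin_cases j <;>
    simp [Matrix.mul_apply, Fin.sum_univ_three, G₃, Matrix.one_apply, hconj,
      Matrix.vecHead, Matrix.vecTail] <;>
    first
      | ring1
      | linear_combination (2 - ω) * hrel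
      | linear_combination (ω - 2) * hrel

lemma G1_ne : G₁ ≠ 1 := by
  intro h
  have := congrFun (congrFun h 0) 1
  simp [G₁, Matrix.one_apply] at this
  exact ω_ne this

lemma G3_ne : G₃ ≠ 1 := by
  intro h
  have := congrFun (congrFun h 0) 1
  simp [G₃, Matrix.one_apply] at this

lemma detP₂ : P₂.det = 3 := by
  rw [Matrix.det_fin_three]
  simp [P₂, Matrix.vecHead, Matrix.vecTail]
  linear_combination (1 - ω) * hrel

lemma diagG₂ : Diagonalizable G₂ := by
  have hP : IsUnit P₂.det := by
    rw [detP₂]; exact isUnit_iff_ne_zero.mpr (by norm_num)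
  refine ⟨P₂, d₂, hP, ?_⟩
  have hmul : G₂ * P₂ = P₂ * Matrix.diagonal d₂ := by
    ext i j
    fin_cases i <;> fin_cases j <;>
      simp [Matrix.mul_apply, Fin.sum_univ_three, G₂, P₂, d₂, Matrix.diagonal, hconj,
        Matrix.vecHead, Matrix.vecTail] <;>
      first
        | ring1
        | linear_combination hrel
        | linear_combination (-2 : ℂ) * hrel
        | linear_combination (2 : ℂ) * hrel
        | linear_combination -hrel
  have hPi : P₂ * P₂⁻¹ = 1 := Matrix.mul_nonsing_inv P₂ hP
  rw [← hmul, Matrix.mul_assoc, hPi, Matrix.mul_one]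

lemma ubfp_G1 : UniqueBoundaryFixedPoint G₁ := by
  refine ⟨![1, 0, 0], ?_, ?_, ⟨1, ?_⟩, ?_⟩
  · intro h
    have := congrFun h 0
    simp at this
  · simp [herm]
  · funext i
    fin_cases i <;>
      simp [G₁, Matrix.mulVec, dotProduct, Fin.sum_univ_three, Matrix.vecHead, Matrix.vecTail]
  · rintro w hw hnull ⟨μ, hμ⟩
    have e1 := congrFun hμ 1
    have e2 := congrFun hμ 2
    simp [G₁, Matrix.mulVec, dotProduct, Fin.sum_univ_three, Matrix.vecHead, Matrix.vecTail,
      hconj] at e1 e2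
    have hw2 : w 2 = 0 := by
      by_contra h2
      have hμ1 : μ = 1 := by
        exact (mul_right_cancel₀ h2 (by linear_combination e2 : 1 * w 2 = μ * w 2)).symm
      rw [hμ1] at e1
      have : (1 - ω) * w 2 = 0 := by linear_combination -e1
      rcases mul_eq_zero.mp this with h | h
      · exact ω_ne' h
      · exact h2 h
    have hw1 : w 1 = 0 := by
      have h := hnull
      simp [herm, hw2] at h
      exact h
    exact ⟨w 0, by funext i; fin_cases i <;> simp [hw1, hw2]⟩

lemma det_G3_sub (μ : ℂ) : (G₃ - μ • 1).det = (1 - μ)^3 := by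
  rw [Matrix.det_fin_three]
  simp [G₃, Matrix.one_apply, Matrix.smul_apply, Matrix.sub_apply, hconj,
    Matrix.vecHead, Matrix.vecTail]
  linear_combination (2 - ω) * hrel

lemma ubfp_G3 : UniqueBoundaryFixedPoint G₃ := by
  refine ⟨![-1, ω - 1, ω], ?_, ?_, ⟨1, ?_⟩, ?_⟩
  · intro h
    have := congrFun h 0
    simp at this
  · simp [herm, hconj, map_sub, map_neg]
    linear_combination -hrel
  · funext i
    fin_cases i <;>
      simp [G₃, Matrix.mulVec, dotProduct, Fin.sum_univ_three, Matrix.vecHead, Matrix.vecTail,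
        hconj] <;>
      first
        | ring1
        | linear_combination hrel
        | linear_combination -hrel
        | linear_combination (2:ℂ) * hrel
        | linear_combination (-2:ℂ) * hrel
  · rintro w hw hnull ⟨μ, hμ⟩
    have hker : (G₃ - μ • 1).mulVec w = 0 := by
      rw [Matrix.sub_mulVec, hμ, Matrix.smul_mulVec, Matrix.one_mulVec]
      simp
    have hdet : (G₃ - μ • 1).det = 0 := by
      rw [← Matrix.exists_mulVec_eq_zero_iff]
      exact ⟨w, hw, hker⟩
    rw [det_G3_sub] at hdet
    have hμ1 : μ = 1 := by
      have h1 : 1 - μ = 0 := pow_eq_zero_iff (by norm_num : 3 ≠ 0) |>.mp hdet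
      linear_combination -h1
    rw [hμ1] at hμ
    have e0 := congrFun hμ 0
    have e2 := congrFun hμ 2
    simp [G₃, Matrix.mulVec, dotProduct, Fin.sum_univ_three, Matrix.vecHead, Matrix.vecTail,
      hconj] at e0 e2
    refine ⟨(1 - ω) * w 2, ?_⟩
    funext i
    fin_cases i <;> simp
    · linear_combination (-ω) * e2 + (w 0 + w 2) * hrel
    · linear_combination e0 + w 2 * hrel
    · linear_combination w 2 * hrel

/-- `G₁` and `G₃` are parabolic: all eigenvalues of modulus one, not
diagonalizable, and a unique fixed point on the boundary.  `G₂` is elliptic: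
diagonalizable with unit-modulus eigenvalues. -/
theorem figure_eight_generators_types :
    (UnitEigenvalues G₁ ∧ ¬ Diagonalizable G₁ ∧ UniqueBoundaryFixedPoint G₁) ∧
    (UnitEigenvalues G₃ ∧ ¬ Diagonalizable G₃ ∧ UniqueBoundaryFixedPoint G₃) ∧
    (UnitEigenvalues G₂ ∧ Diagonalizable G₂) := by
  exact ⟨⟨unitEig_G1, not_diag G₁ cube_G1 G1_ne, ubfp_G1⟩,
    ⟨unitEig_G3, not_diag G₃ cube_G3 G3_ne, ubfp_G3⟩, unitEig_G2, diagG₂⟩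

end
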